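/- Let R be a commutative local perfect ring, P its maximal ideal, E the injective hull of R/P, A a proper ideal of R, and 𝒜* the set of maximal elements among principal ideals contained in A. Then the RD-injective hull of E[A] = {e ∈ E | Ae = 0} is isomorphic to the product ∏_{r* ∈ 𝒜*} E[r*]. -/

import Mathlib

universe u

open MulOpposite

section RDDefsComm

variable (R : Type u) [CommRing R]

/-- `IsTensorZeroC R M N l` encodes the statement `∑ mᵢ ⊗ nᵢ = 0` in `M ⊗_R N`
(modules over a commutative ring `R`), via the universal property of the tensor
product: every `R`-balanced biadditive map kills the sum. -/
def IsTensorZeroC (M N : Type u) [AddCommGroup M] [Module R M]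
    [AddCommGroup N] [Module R N] (l : List (M × N)) : Prop :=
  ∀ (A : Type u) [AddCommGroup A], ∀ b : M → N → A,
    (∀ m₁ m₂ n, b (m₁ + m₂) n = b m₁ n + b m₂ n) →
    (∀ m n₁ n₂, b m (n₁ + n₂) = b m n₁ + b m n₂) →
    (∀ (r : R) (m : M) (n : N), b (r • m) n = b m (r • n)) →
    (l.map fun p => b p.1 p.2).sum = 0

/-- An `R`-module `M` (over a commutative ring) is RD-flat if tensoring with `M`
preserves exactness of all RD-exact sequences; equivalently, for every injective
linear map `f : H → F` whose image is a relatively divisible submodule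
(`rF ∩ f(H) = r f(H)` for all `r`), the induced map `M ⊗ H → M ⊗ F` is injective. -/
def RDFlatC (M : Type u) [AddCommGroup M] [Module R M] : Prop :=
  ∀ (H F : Type u) [AddCommGroup H] [Module R H] [AddCommGroup F] [Module R F],
    ∀ f : H →ₗ[R] F, Function.Injective f →
    (∀ (r : R) (h : H) (y : F), f h = r • y → ∃ h' : H, h = r • h') →
    ∀ l : List (M × H),
      IsTensorZeroC R M F (l.map fun p => (p.1, f p.2)) → IsTensorZeroC R M H l

/-- An `R`-module `N` is RD-injective if every homomorphism into `N` from a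
relatively divisible submodule of an `R`-module extends to the whole module. -/
def RDInjectiveC (N : Type u) [AddCommGroup N] [Module R N] : Prop :=
  ∀ (K L : Type u) [AddCommGroup K] [Module R K] [AddCommGroup L] [Module R L],
    ∀ f : K →ₗ[R] L, Function.Injective f →
    (∀ (r : R) (k : K) (y : L), f k = r • y → ∃ k' : K, k = r • k') →
    ∀ g : K →ₗ[R] N, ∃ h : L →ₗ[R] N, h.comp f = g

/-- An injective linear map `f : K → L` of `R`-modules is pure if every finite
system of linear equations with constants in `K` which is solvable in `L` is
solvable in `K`. -/
def IsPureC {K L : Type u} [AddCommGroup K] [Module R K] [AddCommGroup L]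
    [Module R L] (f : K →ₗ[R] L) : Prop :=
  ∀ (m n : ℕ) (a : Fin m → Fin n → R) (k : Fin m → K),
    (∃ x : Fin n → L, ∀ i, (∑ j, a i j • x j) = f (k i)) →
    ∃ y : Fin n → K, ∀ i, (∑ j, a i j • y j) = k i

/-- An `R`-module `M` is RD-coflat if every RD-exact sequence `0 → M → P → Q → 0`
is pure-exact, i.e. whenever `M` embeds as a relatively divisible submodule of a
module `P`, it is a pure submodule of `P`. -/
def RDCoflatC (M : Type u) [AddCommGroup M] [Module R M] : Prop :=
  ∀ (P : Type u) [AddCommGroup P] [Module R P],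
    ∀ f : M →ₗ[R] P, Function.Injective f →
    (∀ (r : R) (x : M) (y : P), f x = r • y → ∃ x' : M, x = r • x') →
    IsPureC R f

/-- An `R`-module `F` is RD-projective if every homomorphism from `F` to a quotient
in an RD-exact sequence (the kernel is a relatively divisible submodule) lifts. -/
def RDProjectiveC (F : Type u) [AddCommGroup F] [Module R F] : Prop :=
  ∀ (L Q : Type u) [AddCommGroup L] [Module R L] [AddCommGroup Q] [Module R Q],
    ∀ p : L →ₗ[R] Q, Function.Surjective p →
    (∀ (r : R) (x : L), p x = 0 → (∃ y : L, x = r • y) →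
      ∃ z : L, p z = 0 ∧ x = r • z) →
    ∀ g : F →ₗ[R] Q, ∃ h : F →ₗ[R] L, p.comp h = g

end RDDefsComm

open Submodule IsLocalRing

section AuxLemmas

section Tnil
variable {R : Type u} [CommRing R] [IsLocalRing R]

lemma aux_unit_one_add {x : R} (hx : x ∈ maximalIdeal R) : IsUnit (1 + x) := by
  by_contra h
  have h1 : (1 + x) ∈ maximalIdeal R := h
  have : (1 : R) ∈ maximalIdeal R := by simpa using Submodule.sub_mem _ h1 hx
  exact (maximalIdeal.isMaximal R).ne_top (Ideal.eq_top_of_isUnit_mem _ this isUnit_one)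

lemma tnil
    (hperf : ∀ (M : Type u) [AddCommGroup M] [Module R M],
      Module.Flat R M → Module.Projective R M)
    (c : ℕ → R) (hc : ∀ i, c i ∈ maximalIdeal R) :
    ∃ n, ∏ i ∈ Finset.range n, c i = 0 := by
  classical
  set π : ℕ → ℕ → R := fun i j => ∏ t ∈ Finset.Ico i j, c t with hπ
  have hπ_mul : ∀ {i j k}, i ≤ j → j ≤ k → π i j * π j k = π i k := by
    intro i j k hij hjk
    exact Finset.prod_Ico_consecutive _ hij hjk
  have hπ_self : ∀ i, π i i = 1 := by intro i; simp [hπ]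
  have hπ_succ : ∀ m, π m (m+1) = c m := by
    intro m; simp [hπ, Nat.Ico_succ_singleton]
  set f : ∀ i j : ℕ, i ≤ j → (R →ₗ[R] R) := fun i j _ => LinearMap.lsmul R R (π i j) with hf
  haveI : DirectedSystem (fun _ : ℕ => R) (fun i j h => f i j h) := by
    constructor
    · intro i x; simp [hf, hπ_self]
    · intro k j i hij hjk x
      simp only [hf, LinearMap.lsmul_apply, smul_eq_mul, ← mul_assoc]
      rw [mul_comm (π j k) (π i j), hπ_mul hij hjk]
  set F := Module.DirectLimit (fun _ : ℕ => R) f with hF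
  set o : ∀ i : ℕ, R →ₗ[R] F := fun i => Module.DirectLimit.of R ℕ (fun _ : ℕ => R) f i with ho
  have ho_f : ∀ {i j : ℕ} (h : i ≤ j) (x : R), o j (π i j * x) = o i x := by
    intro i j h x
    have := Module.DirectLimit.of_f (R := R) (ι := ℕ) (G := fun _ : ℕ => R) (f := f)
      (i := i) (j := j) (hij := h) (x := x)
    simpa [ho, hf] using this
  -- F is flat via the equational criterion
  have hflat : Module.Flat R F := by
    apply Module.Flat.of_forall_isTrivialRelation
    intro ι g x hsum
    -- represent each x i at a common stage
    have hrep : ∀ i : Fin ι, ∃ n u, o n u = x i := by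
      intro i
      obtain ⟨n, u, hu⟩ := Module.DirectLimit.exists_of (x i)
      exact ⟨n, u, hu⟩
    choose nn uu huu using hrep
    set n : ℕ := Finset.univ.sup nn with hn
    have hle : ∀ i, nn i ≤ n := fun i => Finset.le_sup (Finset.mem_univ i)
    set v : Fin ι → R := fun i => π (nn i) n * uu i with hv
    have hxv : ∀ i, o n (v i) = x i := by
      intro i; rw [hv, ho_f (hle i), huu]
    have hzero : o n (∑ i, g i * v i) = 0 := by
      rw [map_sum]
      calc (∑ i, o n (g i * v i)) = ∑ i, g i • o n (v i) := by
            refine Finset.sum_congr rfl fun i _ => ?_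
            rw [← map_smul, smul_eq_mul]
          _ = 0 := by
            simp_rw [hxv]; exact hsum
    obtain ⟨m, hnm, hm0⟩ := Module.DirectLimit.of.zero_exact hzero
    have hm0' : ∑ i, g i * π n m * v i = 0 := by
      have h2 : π n m * ∑ i, g i * v i = 0 := by
        simp only [hf, LinearMap.lsmul_apply, smul_eq_mul] at hm0
        exact hm0
      rw [← h2, Finset.mul_sum]
      exact Finset.sum_congr rfl fun i _ => by ring
    refine ⟨1, fun i _ => π n m * v i, fun _ => o m 1, ?_, ?_⟩
    · intro i
      rw [← hxv i, ← ho_f hnm (v i)]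
      simp only [Finset.univ_unique, Finset.sum_singleton]
      rw [← map_smul, smul_eq_mul, mul_one]
    · intro j
      simp only [← mul_assoc]
      exact hm0'
  haveI hproj : Module.Projective R F := hperf F hflat
  set p : (ℕ →₀ R) →ₗ[R] F := Finsupp.linearCombination R (fun i : ℕ => o i 1) with hp
  have hp_single : ∀ (i : ℕ) (t : R), p (Finsupp.single i t) = o i t := by
    intro i t
    rw [hp, Finsupp.linearCombination_single, ← map_smul, smul_eq_mul, mul_one]
  have hpsurj : Function.Surjective p := by
    intro z
    obtain ⟨i, u, hu⟩ := Module.DirectLimit.exists_of z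
    exact ⟨Finsupp.single i u, by rw [hp_single]; exact hu⟩
  obtain ⟨h, hh⟩ := Module.projective_lifting_property p LinearMap.id hpsurj
  have hh' : ∀ z, p (h z) = z := fun z => by simpa using LinearMap.ext_iff.mp hh z
  set σ : (ℕ →₀ R) →ₗ[R] (ℕ →₀ R) := LinearMap.id - h ∘ₗ p with hσ
  have hpσ : ∀ z, p (σ z) = 0 := by
    intro z
    simp only [hσ, LinearMap.sub_apply, LinearMap.id_apply, LinearMap.comp_apply, map_sub, hh',
      sub_self]
  have hfix : ∀ z, p z = 0 → σ z = z := by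
    intro z hz
    simp only [hσ, LinearMap.sub_apply, LinearMap.id_apply, LinearMap.comp_apply, hz, map_zero,
      sub_zero]
  set μ : ℕ → ((ℕ →₀ R) →ₗ[R] R) :=
    fun m => Finsupp.linearCombination R (fun i => if i ≤ m then π i m else 0) with hμ
  have hμ_single : ∀ (m i : ℕ) (t : R), μ m (Finsupp.single i t)
      = t * (if i ≤ m then π i m else 0) := by
    intro m i t
    rw [hμ, Finsupp.linearCombination_single, smul_eq_mul]
  have hshift : ∀ (z : ℕ →₀ R) (j k : ℕ) (hjk : j ≤ k), (∀ i ∈ z.support, i ≤ j) →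
      μ k z = π j k * μ j z := by
    intro z j k hjk hsupp
    rw [hμ]
    rw [Finsupp.linearCombination_apply, Finsupp.linearCombination_apply]
    rw [Finsupp.mul_sum]
    apply Finsupp.sum_congr
    intro i hi
    have hij : i ≤ j := hsupp i hi
    simp only [hij, hij.trans hjk, if_true, smul_eq_mul]
    rw [← hπ_mul hij hjk]
    ring
  have hbound : ∀ z : ℕ →₀ R, p z = 0 → ∃ m, ∀ j, m ≤ j → μ j z = 0 := by
    intro z hz
    set s : ℕ := z.support.sup id with hs
    have hsupp : ∀ i ∈ z.support, i ≤ s := fun i hi => Finset.le_sup (f := id) hi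
    have hpz : p z = o s (μ s z) := by
      rw [hp, hμ, Finsupp.linearCombination_apply, Finsupp.linearCombination_apply,
        map_finsuppSum]
      apply Finsupp.sum_congr
      intro i hi
      have his : i ≤ s := hsupp i hi
      simp only [his, if_true, smul_eq_mul]
      rw [← ho_f his 1, mul_one, ← map_smul, smul_eq_mul]
    rw [hz] at hpz
    obtain ⟨m, hsm, hm0⟩ := Module.DirectLimit.of.zero_exact hpz.symm
    have hμm : μ m z = 0 := by
      rw [hshift z s m hsm hsupp]
      simpa [hf] using hm0
    refine ⟨m, fun j hj => ?_⟩
    rw [hshift z m j hj (fun i hi => (hsupp i hi).trans hsm), hμm, mul_zero]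
  -- the key element
  set w : ℕ →₀ R := σ (Finsupp.single 0 1) with hw
  obtain ⟨m, hm⟩ := hbound w (hpσ _)
  set v : ℕ →₀ R := σ (Finsupp.single (m+1) 1) with hv
  have hsingle_eq : Finsupp.single (m+1) (π 0 (m+1)) = π 0 (m+1) • Finsupp.single (m+1) (1:R) := by
    rw [Finsupp.smul_single, smul_eq_mul, mul_one]
  have hz' : p (Finsupp.single 0 1 - Finsupp.single (m+1) (π 0 (m+1))) = 0 := by
    rw [map_sub, hp_single, hp_single, ← ho_f (Nat.zero_le (m+1)) 1, mul_one, sub_self]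
  have hexp : w - π 0 (m+1) • v = Finsupp.single 0 1 - Finsupp.single (m+1) (π 0 (m+1)) := by
    rw [hw, hv, ← map_smul, ← hsingle_eq, ← map_sub]
    exact hfix _ hz'
  have heq := congrArg (μ m) hexp
  rw [map_sub, map_sub, map_smul, hμ_single, hμ_single, hm m le_rfl] at heq
  simp only [Nat.zero_le, if_true, Nat.not_succ_le_self, if_false, one_mul, mul_zero,
    sub_zero, smul_eq_mul, zero_sub] at heq
  -- heq : -(π 0 (m+1) * μ m v) = π 0 m
  have hπ0k : π 0 (m+1) = π 0 m * c m := by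
    rw [← hπ_succ m, hπ_mul (Nat.zero_le m) (Nat.le_succ m)]
  have key : π 0 m * (1 + c m * μ m v) = 0 := by
    rw [hπ0k] at heq
    linear_combination -heq
  have hu : IsUnit (1 + c m * μ m v) :=
    aux_unit_one_add (Ideal.mul_mem_right _ _ (hc m))
  have : π 0 m = 0 := by
    have := congrArg (fun t => t * (hu.unit⁻¹ : Rˣ).1) key
    simpa [mul_assoc, IsUnit.mul_val_inv, hu.mul_val_inv] using this
  exact ⟨m, by rw [Finset.range_eq_Ico]; exact this⟩

end Tnil


section Cor
variable {R : Type u} [CommRing R] [IsLocalRing R]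


lemma exists_socle_smul
    (hperf : ∀ (M : Type u) [AddCommGroup M] [Module R M],
      Module.Flat R M → Module.Projective R M)
    {M : Type u} [AddCommGroup M] [Module R M] (x : M) (hx : x ≠ 0) :
    ∃ t : R, t • x ≠ 0 ∧ ∀ q ∈ maximalIdeal R, q • (t • x) = 0 := by
  by_contra hcon
  push_neg at hcon
  have step : ∀ t : R, t • x ≠ 0 → ∃ q : R, q ∈ maximalIdeal R ∧ (q * t) • x ≠ 0 := by
    intro t ht
    obtain ⟨q, hq, hqt⟩ := hcon t ht
    exact ⟨q, hq, by rwa [mul_smul]⟩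
  let seq : ℕ → {t : R // t • x ≠ 0} := fun n => Nat.rec ⟨1, by simpa using hx⟩
    (fun k prev => ⟨(step prev.1 prev.2).choose * prev.1,
      (step prev.1 prev.2).choose_spec.2⟩) n
  set c : ℕ → R := fun k => (step (seq k).1 (seq k).2).choose with hcdef
  have hc : ∀ k, c k ∈ maximalIdeal R := fun k => (step (seq k).1 (seq k).2).choose_spec.1
  have hseq : ∀ k, (seq (k+1)).1 = c k * (seq k).1 := fun k => rfl
  have hprod : ∀ n, (seq n).1 = ∏ k ∈ Finset.range n, c k := by
    intro n
    induction n with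
    | zero => simp [seq]
    | succ n ih => rw [hseq, ih, Finset.prod_range_succ]; ring
  obtain ⟨n, hn⟩ := tnil hperf c hc
  exact (seq n).2 (by rw [hprod, hn, zero_smul])

lemma exists_maximal_principal
    (hperf : ∀ (M : Type u) [AddCommGroup M] [Module R M],
      Module.Flat R M → Module.Projective R M)
    (A : Ideal R) (b₀ : R) (hb₀ : Ideal.span {b₀} ≤ A) :
    ∃ I : Ideal R, ((∃ r : R, I = Ideal.span {r}) ∧ I ≤ A ∧
      ∀ J : Ideal R, (∃ r : R, J = Ideal.span {r}) → J ≤ A → I ≤ J → J = I) ∧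
      Ideal.span {b₀} ≤ I := by
  by_contra hcon
  push_neg at hcon
  have step : ∀ b : R, Ideal.span {b} ≤ A → Ideal.span {b₀} ≤ Ideal.span {b} →
      ∃ b' : R, Ideal.span {b'} ≤ A ∧ Ideal.span {b} < Ideal.span {b'} := by
    intro b hbA hb₀b
    by_contra hno
    push_neg at hno
    apply hcon (Ideal.span {b}) ?_ hb₀b
    refine ⟨⟨b, rfl⟩, hbA, ?_⟩
    intro J hJp hJA hbJ
    obtain ⟨r, rfl⟩ := hJp
    by_contra hne
    exact hno r (hJA) (lt_of_le_of_ne hbJ (fun hh => hne hh.symm))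
  let seq : ℕ → {b : R // Ideal.span {b} ≤ A ∧ Ideal.span {b₀} ≤ Ideal.span {b}} :=
    fun n => Nat.rec ⟨b₀, hb₀, le_rfl⟩
      (fun k prev => ⟨(step prev.1 prev.2.1 prev.2.2).choose,
        (step prev.1 prev.2.1 prev.2.2).choose_spec.1,
        prev.2.2.trans (le_of_lt (step prev.1 prev.2.1 prev.2.2).choose_spec.2)⟩) n
  have hlt : ∀ k, Ideal.span {(seq k).1} < Ideal.span {(seq (k+1)).1} :=
    fun k => (step (seq k).1 (seq k).2.1 (seq k).2.2).choose_spec.2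
  have hmem : ∀ k, ∃ a : R, a * (seq (k+1)).1 = (seq k).1 := by
    intro k
    exact Ideal.mem_span_singleton'.mp ((hlt k).le (Ideal.mem_span_singleton_self _))
  choose cc hcc using hmem
  have hcP : ∀ k, cc k ∈ maximalIdeal R := by
    intro k
    rw [mem_maximalIdeal, mem_nonunits_iff]
    intro hu
    have : Ideal.span {(seq k).1} = Ideal.span {(seq (k+1)).1} := by
      rw [← hcc k]; exact Ideal.span_singleton_mul_left_unit hu _
    exact (hlt k).ne this
  have htel : ∀ j n, (seq j).1 = (∏ k ∈ Finset.range n, cc (j + k)) * (seq (j + n)).1 := by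
    intro j n
    induction n with
    | zero => simp
    | succ n ih =>
      rw [Finset.prod_range_succ, mul_assoc]
      have hjn : j + (n+1) = (j + n) + 1 := by omega
      rw [hjn, hcc (j+n)]
      exact ih
  have hzero : ∀ j, (seq j).1 = 0 := by
    intro j
    obtain ⟨n, hn⟩ := tnil hperf (fun k => cc (j + k)) (fun k => hcP _)
    rw [htel j n, hn, zero_mul]
  have h01 := hlt 0
  rw [hzero 0, hzero (0+1)] at h01
  exact lt_irrefl _ h01

end Cor


section Div
variable {R : Type u} [CommRing R] {E : Type u} [AddCommGroup E] [Module R E]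

/-- If `E` is injective and `t • x = 0` whenever `t * r ∈ B`, then `x = r • e` for
some `e` killed by `B`. -/
lemma exists_div (hE : Module.Injective R E) (B : Ideal R) (r : R) (x : E)
    (hx : ∀ t : R, t * r ∈ B → t • x = 0) :
    ∃ e : E, r • e = x ∧ ∀ b ∈ B, b • e = 0 := by
  classical
  set J : Ideal R := Ideal.span {r} ⊔ B with hJ
  have hrep : ∀ z : R, z ∈ J → ∃ t b : R, b ∈ B ∧ z = t * r + b := by
    intro z hz
    rw [hJ] at hz
    obtain ⟨y, hy, b, hb, hyb⟩ := Submodule.mem_sup.mp hz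
    obtain ⟨t, ht⟩ := Ideal.mem_span_singleton'.mp hy
    exact ⟨t, b, hb, by rw [← hyb, ht]⟩
  have hwd : ∀ t b t' b' : R, b ∈ B → b' ∈ B → t * r + b = t' * r + b' →
      t • x = t' • x := by
    intro t b t' b' hb hb' heq
    have hmem : (t - t') * r ∈ B := by
      have : (t - t') * r = b' - b := by ring_nf; linear_combination heq
      rw [this]; exact Submodule.sub_mem _ hb' hb
    have := hx _ hmem
    rw [sub_smul, sub_eq_zero] at this
    exact this
  let φ₀ : J → E := fun z => (hrep z.1 z.2).choose • x
  have hφ₀ : ∀ (z : J) (t b : R), b ∈ B → z.1 = t * r + b → φ₀ z = t • x := by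
    intro z t b hb hzb
    obtain ⟨b', hb', hz'⟩ := (hrep z.1 z.2).choose_spec
    exact hwd _ _ _ _ hb' hb (by rw [← hz', ← hzb])
  let φ : J →ₗ[R] E :=
    { toFun := φ₀
      map_add' := by
        intro z₁ z₂
        obtain ⟨t₁, b₁, hb₁, h₁⟩ := hrep z₁.1 z₁.2
        obtain ⟨t₂, b₂, hb₂, h₂⟩ := hrep z₂.1 z₂.2
        rw [hφ₀ z₁ t₁ b₁ hb₁ h₁, hφ₀ z₂ t₂ b₂ hb₂ h₂,
          hφ₀ (z₁ + z₂) (t₁ + t₂) (b₁ + b₂) (Submodule.add_mem _ hb₁ hb₂)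
            (by push_cast; rw [h₁, h₂]; ring), add_smul]
      map_smul' := by
        intro s z
        obtain ⟨t, b, hb, h⟩ := hrep z.1 z.2
        show φ₀ (s • z) = s • φ₀ z
        rw [ hφ₀ z t b hb h,
          hφ₀ (s • z) (s * t) (s * b) (Ideal.mul_mem_left _ _ hb)
            (by rw [Submodule.coe_smul, smul_eq_mul, h]; ring), mul_smul] }
  obtain ⟨h, hh⟩ := hE.out J.subtype (Submodule.injective_subtype J) φ
  refine ⟨h 1, ?_, ?_⟩
  · have hrJ : r ∈ J := le_sup_left (α := Ideal R) (Ideal.mem_span_singleton_self r)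
    calc r • h 1 = h (r • 1) := (map_smul h r 1).symm
      _ = h r := by rw [smul_eq_mul, mul_one]
      _ = φ ⟨r, hrJ⟩ := hh ⟨r, hrJ⟩
      _ = (1:R) • x := hφ₀ _ 1 0 (Submodule.zero_mem _) (by show r = 1 * r + 0; ring)
      _ = x := one_smul R x
  · intro b hb
    have hbJ : b ∈ J := le_sup_right (α := Ideal R) hb
    have h1 : h b = φ ⟨b, hbJ⟩ := hh ⟨b, hbJ⟩
    have h2 : φ ⟨b, hbJ⟩ = (0 : R) • x := hφ₀ _ 0 b hb (by simp)
    have h3 : h b = h (b • 1) := by rw [smul_eq_mul, mul_one]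
    rw [← map_smul, ← h3, h1, h2, zero_smul]
end Div


section RDExt
variable {R : Type u} [CommRing R] {E : Type u} [AddCommGroup E] [Module R E]

lemma rd_extend (hE : Module.Injective R E) (r : R)
    {K L : Type u} [AddCommGroup K] [Module R K] [AddCommGroup L] [Module R L]
    (f : K →ₗ[R] L) (hrd : ∀ (k : K) (y : L), f k = r • y → ∃ k', k = r • k')
    (g : K →ₗ[R] E) (hg : ∀ k, r • g k = 0) :
    ∃ h : L →ₗ[R] E, (∀ k, h (f k) = g k) ∧ ∀ x : L, r • h x = 0 := by
  classical
  set SK : Submodule R K := LinearMap.range (LinearMap.lsmul R K r) with hSK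
  set SL : Submodule R L := LinearMap.range (LinearMap.lsmul R L r) with hSL
  have hker : SK ≤ LinearMap.ker g := by
    rintro x ⟨k, rfl⟩
    simp only [LinearMap.lsmul_apply, LinearMap.mem_ker, map_smul]
    exact hg k
  set gb : (K ⧸ SK) →ₗ[R] E := SK.liftQ g hker with hgb
  have hcomap : SK ≤ SL.comap f := by
    rintro x ⟨k, rfl⟩
    exact ⟨f k, by simp⟩
  set q : (K ⧸ SK) →ₗ[R] (L ⧸ SL) := SK.mapQ SL f hcomap with hq
  have hqinj : Function.Injective q := by
    rw [← LinearMap.ker_eq_bot]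
    rw [Submodule.eq_bot_iff]
    intro a ha
    obtain ⟨k, rfl⟩ := Submodule.Quotient.mk_surjective SK a
    rw [LinearMap.mem_ker, hq, Submodule.mapQ_apply] at ha
    have hfk : f k ∈ SL := (Submodule.Quotient.mk_eq_zero SL).mp ha
    obtain ⟨y, hy⟩ := hfk
    obtain ⟨k', hk'⟩ := hrd k y (by rw [← hy]; rfl)
    have hkSK : k ∈ SK := ⟨k', hk'.symm⟩
    exact (Submodule.Quotient.mk_eq_zero SK).mpr hkSK
  obtain ⟨hb, hhb⟩ := hE.out q hqinj gb
  refine ⟨hb ∘ₗ SL.mkQ, ?_, ?_⟩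
  · intro k
    have h1 : (Submodule.Quotient.mk (f k) : L ⧸ SL) = q (Submodule.Quotient.mk k) := by
      rw [hq, Submodule.mapQ_apply]
    rw [LinearMap.comp_apply, Submodule.mkQ_apply, h1, hhb, hgb, Submodule.liftQ_apply]
  · intro x
    have hxm : r • x ∈ SL := ⟨x, rfl⟩
    have hz : SL.mkQ (r • x) = 0 := by
      rw [Submodule.mkQ_apply]
      exact (Submodule.Quotient.mk_eq_zero SL).mpr hxm
    rw [LinearMap.comp_apply, ← map_smul, ← map_smul, hz, map_zero]
end RDExt

end AuxLemmas

/-- Let `R` be a commutative local perfect ring with maximal ideal `P`, `E` the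
injective hull of `R/P`, `A` a proper ideal of `R`, and `𝒜*` the set of maximal
elements among the principal ideals contained in `A`.  Then the RD-injective hull of
`E[A] = {e ∈ E | Ae = 0}` is the product `∏_{r* ∈ 𝒜*} E[r*]`: there is an embedding
of `E[A]` into the product as a relatively divisible, RD-essential submodule, and the
product is RD-injective. -/


theorem rdInjectiveHull_torsionBy_eq_prod (R : Type u) [CommRing R] [IsLocalRing R]
    (hperf : ∀ (M : Type u) [AddCommGroup M] [Module R M],
      Module.Flat R M → Module.Projective R M)
    (E : Type u) [AddCommGroup E] [Module R E] (hE : Module.Injective R E)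
    (ι : (R ⧸ maximalIdeal R) →ₗ[R] E) (hι : Function.Injective ι)
    (hess : ∀ N : Submodule R E, N ⊓ LinearMap.range ι = ⊥ → N = ⊥)
    (A : Ideal R) (hA : A ≠ ⊤)
    (S : Set (Ideal R))
    (hS : S = {I : Ideal R | (∃ r : R, I = Ideal.span {r}) ∧ I ≤ A ∧
      ∀ J : Ideal R, (∃ r : R, J = Ideal.span {r}) → J ≤ A → I ≤ J → J = I}) :
    ∃ ψ : torsionBySet R E (A : Set R) →ₗ[R]
        (∀ I : S, torsionBySet R E ((I : Ideal R) : Set R)),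
      Function.Injective ψ ∧
      (∀ (r : R) (x : torsionBySet R E (A : Set R))
        (y : ∀ I : S, torsionBySet R E ((I : Ideal R) : Set R)),
          ψ x = r • y → ∃ x', x = r • x') ∧
      (∀ N : Submodule R (∀ I : S, torsionBySet R E ((I : Ideal R) : Set R)),
        N ⊓ LinearMap.range ψ = ⊥ →
        (∀ (r : R) (x : torsionBySet R E (A : Set R))
          (y : (∀ I : S, torsionBySet R E ((I : Ideal R) : Set R)) ⧸ N),
            N.mkQ (ψ x) = r • y → ∃ x', N.mkQ (ψ x) = r • N.mkQ (ψ x')) →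
        N = ⊥) ∧
      RDInjectiveC R (∀ I : S, torsionBySet R E ((I : Ideal R) : Set R)) := by
  classical
  subst hS
  set S : Set (Ideal R) := {I : Ideal R | (∃ r : R, I = Ideal.span {r}) ∧ I ≤ A ∧
      ∀ J : Ideal R, (∃ r : R, J = Ideal.span {r}) → J ≤ A → I ≤ J → J = I} with hS
  -- basic facts
  have hmemS : ∀ I : ↥S, (∃ r : R, (I : Ideal R) = Ideal.span {r}) ∧ (I : Ideal R) ≤ A ∧
      ∀ J : Ideal R, (∃ r : R, J = Ideal.span {r}) → J ≤ A → (I : Ideal R) ≤ J → J = (I : Ideal R) :=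
    fun I => I.2
  have hgen : ∀ I : ↥S, ∃ r : R, (I : Ideal R) = Ideal.span {r} := fun I => (hmemS I).1
  choose rS hrS using hgen
  have hrSmem : ∀ I : ↥S, rS I ∈ (I : Ideal R) := by
    intro I; rw [hrS I]; exact Ideal.mem_span_singleton_self _
  have hIA : ∀ I : ↥S, (I : Ideal R) ≤ A := fun I => (hmemS I).2.1
  have hAP : A ≤ maximalIdeal R := IsLocalRing.le_maximalIdeal hA
  -- the embedding
  have hle : ∀ I : ↥S, torsionBySet R E (A : Set R) ≤ torsionBySet R E ((I : Ideal R) : Set R) :=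
    fun I => torsionBySet_le_torsionBySet_of_subset (hIA I)
  set ψ : torsionBySet R E (A : Set R) →ₗ[R]
      (∀ I : ↥S, torsionBySet R E ((I : Ideal R) : Set R)) :=
    LinearMap.pi (fun I => Submodule.inclusion (hle I)) with hψ
  have hψ_app : ∀ (x : torsionBySet R E (A : Set R)) (I : ↥S), ((ψ x I : E)) = (x : E) := by
    intro x I
    rw [hψ, LinearMap.pi_apply, Submodule.coe_inclusion]
  -- nonemptiness of S
  obtain ⟨I₀', hI₀'mem, -⟩ := exists_maximal_principal hperf A 0
    (Ideal.span_le.mpr (Set.singleton_subset_iff.mpr A.zero_mem))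
  have hS_ne : Nonempty ↥S := ⟨⟨I₀', hI₀'mem⟩⟩
  -- injectivity
  have hinj : Function.Injective ψ := by
    intro x y hxy
    obtain ⟨I⟩ := hS_ne
    have := congrFun hxy I
    have hxe : (x : E) = (y : E) := by
      rw [← hψ_app x I, ← hψ_app y I, this]
    exact Subtype.ext hxe
  refine ⟨ψ, hinj, ?_, ?_, ?_⟩
  · -- relative divisibility
    intro r x y hxy
    have hclaim : ∀ t : R, t * r ∈ A → t • (x : E) = 0 := by
      intro t ht
      obtain ⟨I, hImem, hsub⟩ := exists_maximal_principal hperf A (t * r)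
        (Ideal.span_le.mpr (Set.singleton_subset_iff.mpr ht))
      set I' : ↥S := ⟨I, hImem⟩
      have hcomp : (x : E) = r • ((y I' : E)) := by
        have h1 := congrFun hxy I'
        have h2 : ((ψ x I' : E)) = ((r • y) I' : E) := by rw [h1]
        rw [hψ_app x I'] at h2
        rw [h2]
        rfl
      have htrI : t * r ∈ I := hsub (Ideal.mem_span_singleton_self _)
      rw [hcomp, smul_smul]
      exact (Submodule.mem_torsionBySet_iff _ _).mp (y I').2 ⟨t * r, htrI⟩
    obtain ⟨e, hre, heB⟩ := exists_div hE A r (x : E) hclaim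
    have heA : e ∈ torsionBySet R E (A : Set R) :=
      (Submodule.mem_torsionBySet_iff _ _).mpr (fun a => heB a.1 a.2)
    exact ⟨⟨e, heA⟩, Subtype.ext (by rw [← hre]; rfl)⟩
  · -- RD-essential
    intro N hNdisj Hrd
    rw [Submodule.eq_bot_iff]
    intro n hnN
    by_contra hn0
    obtain ⟨t, htn0, hPtn⟩ := exists_socle_smul hperf n hn0
    set w := t • n with hw
    have hwN : w ∈ N := Submodule.smul_mem N t hnN
    obtain ⟨I₀, hI₀ne⟩ : ∃ I₀ : ↥S, w I₀ ≠ 0 := by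
      by_contra hcon
      push_neg at hcon
      exact htn0 (funext (fun I => hcon I))
    set r₀ : R := rS I₀ with hr₀
    have hr₀A : r₀ ∈ A := hIA I₀ (hrSmem I₀)
    set e₀ : E := (w I₀ : E) with he₀
    have he₀ne : e₀ ≠ 0 := fun hc => hI₀ne (Subtype.ext hc)
    have hPe : ∀ q ∈ maximalIdeal R, ∀ I : ↥S, q • ((w I : E)) = 0 := by
      intro q hq I
      have h1 := congrFun (hPtn q hq) I
      show (((q • w) I : E)) = 0
      rw [h1]
      rfl
    have he₀A : e₀ ∈ torsionBySet R E (A : Set R) := by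
      refine (Submodule.mem_torsionBySet_iff _ _).mpr (fun a => ?_)
      exact hPe a.1 (hAP a.2) I₀
    set x₀ : torsionBySet R E (A : Set R) := ⟨e₀, he₀A⟩ with hx₀
    -- construct the divisor family
    have hYex : ∀ I : ↥S, ∃ y : torsionBySet R E ((I : Ideal R) : Set R),
        r₀ • (y : E) = e₀ - (w I : E) := by
      intro I
      by_cases hII : I = I₀
      · refine ⟨0, ?_⟩
        rw [hII, ← he₀]
        simp
      · have hdiv : ∀ t' : R, t' * r₀ ∈ (I : Ideal R) → t' • (e₀ - (w I : E)) = 0 := by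
          intro t' ht'
          by_cases hu : IsUnit t'
          · exfalso
            have hr₀I : r₀ ∈ (I : Ideal R) := by
              have := Ideal.mul_mem_left _ (hu.unit⁻¹ : Rˣ).1 ht'
              rwa [← mul_assoc, IsUnit.val_inv_mul, one_mul] at this
            have hI₀le : (I₀ : Ideal R) ≤ (I : Ideal R) := by
              rw [hrS I₀]
              exact Ideal.span_le.mpr (Set.singleton_subset_iff.mpr hr₀I)
            have := (hmemS I₀).2.2 (I : Ideal R) ⟨rS I, hrS I⟩ (hIA I) hI₀le
            exact hII (Subtype.ext this.symm).symm
          · have ht'P : t' ∈ maximalIdeal R := by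
              rw [mem_maximalIdeal, mem_nonunits_iff]; exact hu
            rw [smul_sub, hPe t' ht'P I, hPe t' ht'P I₀, sub_zero]
        obtain ⟨e, hre, heI⟩ := exists_div hE (I : Ideal R) r₀ (e₀ - (w I : E)) hdiv
        exact ⟨⟨e, (Submodule.mem_torsionBySet_iff _ _).mpr (fun a => heI a.1 a.2)⟩, hre⟩
    choose Y hY using hYex
    have hψw : ψ x₀ - r₀ • Y = w := by
      funext I
      have : ((ψ x₀ - r₀ • Y) I : E) = (w I : E) := by
        have h1 : ((ψ x₀ - r₀ • Y) I : E) = (ψ x₀ I : E) - r₀ • (Y I : E) := rfl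
        rw [h1, hψ_app x₀ I, hY I]
        show e₀ - (e₀ - (w I : E)) = (w I : E)
        rw [sub_sub_cancel]
      exact Subtype.ext this
    have hmk : N.mkQ (ψ x₀) = r₀ • N.mkQ Y := by
      rw [← map_smul, Submodule.mkQ_apply, Submodule.mkQ_apply, Submodule.Quotient.eq]
      rw [hψw]
      exact hwN
    obtain ⟨x', hx'⟩ := Hrd r₀ x₀ (N.mkQ Y) hmk
    have hdiff : ψ x₀ - r₀ • ψ x' ∈ N := by
      have h2 : N.mkQ (ψ x₀) = N.mkQ (r₀ • ψ x') := by rw [map_smul]; exact hx'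
      rw [Submodule.mkQ_apply, Submodule.mkQ_apply] at h2
      exact (Submodule.Quotient.eq N).mp h2
    have hdiff2 : ψ x₀ - r₀ • ψ x' = ψ (x₀ - r₀ • x') := by rw [map_sub, map_smul]
    have hzero : ψ (x₀ - r₀ • x') = 0 := by
      have hin : ψ (x₀ - r₀ • x') ∈ N ⊓ LinearMap.range ψ :=
        ⟨by rw [← hdiff2]; exact hdiff, ⟨x₀ - r₀ • x', rfl⟩⟩
      rw [hNdisj] at hin
      exact hin
    have : x₀ = r₀ • x' := by
      have := hinj (a₁ := x₀ - r₀ • x') (a₂ := 0) (by rw [hzero, map_zero])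
      rwa [sub_eq_zero] at this
    have he₀0 : e₀ = 0 := by
      have hcoe : (x₀ : E) = r₀ • (x' : E) := by rw [this]; rfl
      have : r₀ • (x' : E) = 0 :=
        (Submodule.mem_torsionBySet_iff _ _).mp x'.2 ⟨r₀, hr₀A⟩
      rw [hx₀] at hcoe
      simpa [this] using hcoe
    exact he₀ne he₀0
  · -- RD-injectivity of the product
    intro K L _ _ _ _ f hfinj hfrd g
    have hcomp : ∀ I : ↥S, ∃ h : L →ₗ[R] E,
        (∀ k, h (f k) = ((g k I : E))) ∧ ∀ x : L, rS I • h x = 0 := by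
      intro I
      set gI : K →ₗ[R] E :=
        (torsionBySet R E ((I : Ideal R) : Set R)).subtype ∘ₗ (LinearMap.proj I) ∘ₗ g with hgI
      have hgtor : ∀ k, rS I • gI k = 0 := by
        intro k
        exact (Submodule.mem_torsionBySet_iff _ _).mp (g k I).2 ⟨rS I, hrSmem I⟩
      obtain ⟨h, hh1, hh2⟩ := rd_extend hE (rS I) f (fun k y hy => hfrd (rS I) k y hy) gI hgtor
      exact ⟨h, fun k => hh1 k, hh2⟩
    choose hmap hmap1 hmap2 using hcomp
    have hmem : ∀ (I : ↥S) (x : L), hmap I x ∈ torsionBySet R E ((I : Ideal R) : Set R) := by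
      intro I x
      refine (Submodule.mem_torsionBySet_iff _ _).mpr (fun a => ?_)
      obtain ⟨uu, huu⟩ : ∃ u : R, u * rS I = a.1 := by
        have : (a : R) ∈ Ideal.span {rS I} := by rw [← hrS I]; exact a.2
        exact Ideal.mem_span_singleton'.mp this
      rw [← huu, mul_smul, hmap2 I x, smul_zero]
    refine ⟨LinearMap.pi (fun I => LinearMap.codRestrict _ (hmap I) (hmem I)), ?_⟩
    apply LinearMap.ext
    intro k
    funext I
    apply Subtype.ext
    show hmap I (f k) = ((g k I : E))
    exact hmap1 I k
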